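/- A countably infinite locally finite structure K is ultrahomogeneous (every isomorphism between finite substructures extends to an automorphism of K) if and only if K has the extension property: for all finite structures A ⊆ B in Age(K), every embedding of A into K extends to an embedding of B into K. -/

import Mathlib

open FirstOrder CategoryTheory

universe u v

/-- A structure is locally finite if it is the union of an increasing chain of finite
substructures. -/
def IsLocallyFinite (L : FirstOrder.Language.{u, v}) (M : Type*) [L.Structure M] : Prop :=
  ∃ A : ℕ → L.Substructure M, Monotone A ∧ (∀ n, ((A n : Set M)).Finite) ∧
    (⋃ n, ((A n : Set M))) = Set.univ

/-- `M` is ultrahomogeneous: every isomorphism between finite substructures of `M`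
extends to an automorphism of `M`. -/
def IsUltrahomog (L : FirstOrder.Language.{u, v}) (M : Type*) [L.Structure M] : Prop :=
  ∀ S T : L.Substructure M, (S : Set M).Finite → (T : Set M).Finite →
    ∀ f : S ≃[L] T, ∃ g : M ≃[L] M, ∀ x : S, g x = f x

/-- `M` has the extension property: for finite structures `A ⊆ B` in `Age(M)`, every
embedding of `A` into `M` extends to an embedding of `B` into `M`. -/
def HasExtensionProperty (L : FirstOrder.Language.{u, v}) (M : Type*) [L.Structure M] : Prop :=
  ∀ B : Bundled.{0} L.Structure, Finite B → Nonempty (B ↪[L] M) →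
    ∀ (A : L.Substructure B) (f : A ↪[L] M),
      ∃ g : B ↪[L] M, ∀ x : A, g x = f x

section Aux

open FirstOrder.Language

variable {L : FirstOrder.Language.{u, v}} {M : Type*} [L.Structure M]

/-- In a locally finite structure, every finitely generated substructure is finite. -/
lemma IsLocallyFinite.finite_of_fg (hlf : IsLocallyFinite L M) {S : L.Substructure M}
    (h : S.FG) : (S : Set M).Finite := by
  obtain ⟨A, hmono, hfin, hU⟩ := hlf
  obtain ⟨t, htfin, hclos⟩ := Substructure.fg_def.1 h
  haveI := htfin.to_subtype
  choose n hn using fun x : t => Set.mem_iUnion.1 (hU ▸ Set.mem_univ (x : M))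
  obtain ⟨N, hN⟩ := Finite.exists_le n
  have ht : t ⊆ (A N : Set M) := fun x hx => hmono (hN ⟨x, hx⟩) (hn ⟨x, hx⟩)
  have hle : S ≤ A N := hclos ▸ Substructure.closure_le.2 ht
  exact (hfin N).subset hle

lemma fg_of_set_finite {S : L.Substructure M} (h : (S : Set M).Finite) : S.FG :=
  Substructure.fg_def.2 ⟨S, h, Substructure.closure_eq S⟩

/-- Our notion of ultrahomogeneity coincides with Mathlib's for locally finite structures. -/
lemma isUltrahomog_iff (hlf : IsLocallyFinite L M) :
    IsUltrahomog L M ↔ L.IsUltrahomogeneous M := by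
  constructor
  · intro hU S hFG f
    have hSfin : (S : Set M).Finite := hlf.finite_of_fg hFG
    have hTfin : (f.toHom.range : Set M).Finite :=
      hlf.finite_of_fg (((S.fg_iff_structure_fg).1 hFG).range f.toHom)
    obtain ⟨g, hg⟩ := hU S f.toHom.range hSfin hTfin f.equivRange
    refine ⟨g, ?_⟩
    ext x
    simp only [Embedding.comp_apply, FirstOrder.Language.Equiv.coe_toEmbedding,
      Substructure.coe_subtype]
    rw [hg x]
    simp [Embedding.equivRange_apply]
  · intro h S T hSfin hTfin e
    haveI : Finite S := hSfin.to_subtype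
    obtain ⟨g, hg⟩ := h S (fg_of_set_finite hSfin) (T.subtype.comp e.toEmbedding)
    refine ⟨g, fun x => ?_⟩
    have := congr_fun (congr_arg DFunLike.coe hg) x
    simp only [Embedding.comp_apply, Equiv.coe_toEmbedding, Substructure.coe_subtype] at this
    exact this.symm

lemma hasExtensionProperty_of_ultrahomogeneous (h : L.IsUltrahomogeneous M) :
    HasExtensionProperty L M := by
  intro B hBfin hne A f
  haveI : Finite A := Subtype.finite
  have hAfg : Structure.FG L A := Structure.FG.of_finite
  obtain ⟨f', hf'⟩ := h.extend_embedding hAfg f A.subtype (h := hne)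
  refine ⟨f', fun x => ?_⟩
  have := congr_fun (congr_arg DFunLike.coe hf') x
  simp only [Embedding.comp_apply, Substructure.coe_subtype] at this
  exact this.symm

end Aux

section Aux2

open FirstOrder.Language

variable {L : FirstOrder.Language.{u, v}} {M : Type} [L.Structure M]

lemma isExtensionPair_of_hasExtensionProperty (hlf : IsLocallyFinite L M)
    (hEP : HasExtensionProperty L M) : L.IsExtensionPair M M := by
  rw [isExtensionPair_iff_exists_embedding_closure_singleton_sup]
  intro S hFG f m
  set P : L.Substructure M := Substructure.closure L {m} ⊔ S with hP
  have hPfg : P.FG := (Substructure.fg_closure_singleton m).sup hFG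
  have hPfin : (P : Set M).Finite := hlf.finite_of_fg hPfg
  have hfinP : Finite ↥P := hPfin.to_subtype
  let i : S ↪[L] P := Substructure.inclusion le_sup_right
  let A : L.Substructure P := i.toHom.range
  let f' : A ↪[L] M := f.comp i.equivRange.symm.toEmbedding
  obtain ⟨g, hg⟩ := hEP (Bundled.of ↥P) hfinP ⟨P.subtype⟩ A f'
  refine ⟨g, ?_⟩
  ext x
  exact ((hg (i.equivRange x)).trans (congrArg f (i.equivRange.symm_apply_apply x))).symm

end Aux2

/-- A countably infinite locally finite structure is ultrahomogeneous iff it has the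
extension property. -/
theorem ultrahomogeneous_iff_extensionProperty
    (L : FirstOrder.Language.{u, v}) (M : Bundled.{0} L.Structure)
    (hcount : Countable M) (hinf : Infinite M) (hlf : IsLocallyFinite L M) :
    IsUltrahomog L M ↔ HasExtensionProperty L M := by
  constructor
  · intro h
    exact hasExtensionProperty_of_ultrahomogeneous ((isUltrahomog_iff hlf).1 h)
  · intro h
    haveI := hcount
    have hCG : FirstOrder.Language.Structure.CG L M :=
      FirstOrder.Language.Structure.cg_of_countable
    exact (isUltrahomog_iff hlf).2
      ((FirstOrder.Language.isUltrahomogeneous_iff_IsExtensionPair hCG).2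
        (isExtensionPair_of_hasExtensionProperty hlf h))
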